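/- Let φ : [1]^{m} → [1]^{n} be a surjective, interval-preserving monotone function with n ≥ 1. Then there exist a coordinate permutation g of [1]^m, natural numbers m_1,...,m_n with m_1 + ... + m_n = m, and surjective monotone functions φ_i : [1]^{m_i} → [1] (i = 1,...,n) such that φ ∘ g = φ_1 × φ_2 × ... × φ_n (the product map acting on the corresponding blocks of coordinates). -/

import Mathlib

set_option linter.unusedSectionVars false

namespace S8

variable {ι : Type}

def Reach (f g : (ι → Bool) → Bool) : Prop :=
  ∀ p q : ι → Bool, p ≤ q → ∀ c₁ c₂ : Bool, f p ≤ c₁ → c₁ ≤ f q → g p ≤ c₂ → c₂ ≤ g q →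
    ∃ u, p ≤ u ∧ u ≤ q ∧ f u = c₁ ∧ g u = c₂

def Minp (f : (ι → Bool) → Bool) (Z : ι → Bool) : Prop :=
  f Z = true ∧ ∀ y, y ≤ Z → f y = true → y = Z

def Maxp (f : (ι → Bool) → Bool) (M : ι → Bool) : Prop :=
  f M = false ∧ ∀ y, M ≤ y → f y = false → y = M

lemma ble {a b : Bool} : a ≤ b ↔ (a = true → b = true) := by
  revert a b; decide

lemma btrue {a b : Bool} (h : a = true) (h2 : a ≤ b) : b = true := ble.mp h2 h

lemma bfalse {a b : Bool} (h : b = false) (h2 : a ≤ b) : a = false := by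
  revert h h2; revert a b; decide

lemma Reach.swap {f g : (ι → Bool) → Bool} (hR : Reach f g) : Reach g f := by
  intro p q hpq c₁ c₂ h1 h2 h3 h4
  obtain ⟨u, a, b, c, d⟩ := hR p q hpq c₂ c₁ h3 h4 h1 h2
  exact ⟨u, a, b, d, c⟩

def IH (N : ℕ) : Prop :=
  ∀ (κ : Type) (_ : DecidableEq κ) (_ : Fintype κ), Fintype.card κ < N →
    ∀ f g : (κ → Bool) → Bool, Monotone f → Monotone g → Reach f g →
      f ⊥ = false → g ⊥ = false →
      ∀ Z W (j : κ), Minp f Z → Minp g W → Z j = true → W j = true → False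

/-- extension of a point of the subcube `[⊥, Q]` by `false` outside -/
def ext (Q : ι → Bool) (y : {l // Q l = true} → Bool) : ι → Bool :=
  fun l => if h : Q l = true then y ⟨l, h⟩ else false

/-- restriction of a point to the subcube -/
def res (Q : ι → Bool) (x : ι → Bool) : {l // Q l = true} → Bool := fun i => x i.1

variable {Q : ι → Bool}

lemma ext_mono : Monotone (ext Q) := by
  intro y y' h l
  unfold ext
  by_cases hl : Q l = true
  · simp only [hl, dif_pos]; exact h _
  · simp only [hl, dif_neg, not_false_iff]; exact le_rfl

lemma ext_le (y : {l // Q l = true} → Bool) : ext Q y ≤ Q := by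
  intro l
  unfold ext
  by_cases hl : Q l = true
  · simp only [hl, dif_pos]
    exact Bool.le_true _
  · simp only [hl, dif_neg, not_false_iff]
    exact Bool.false_le _

lemma ext_res {x : ι → Bool} (hx : x ≤ Q) : ext Q (res Q x) = x := by
  funext l
  unfold ext res
  by_cases hl : Q l = true
  · simp [hl]
  · simp only [hl, dif_neg, not_false_iff]
    have hQl : Q l = false := by revert hl; cases Q l <;> simp
    exact (bfalse hQl (hx l)).symm

lemma res_ext (y : {l // Q l = true} → Bool) : res Q (ext Q y) = y := by
  funext i
  unfold ext res
  simp [i.2]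

lemma ext_bot : ext Q ⊥ = ⊥ := by
  funext l
  unfold ext
  by_cases hl : Q l = true
  · simp only [hl, dif_pos]; rfl
  · simp only [hl, dif_neg, not_false_iff]; rfl

section
variable [DecidableEq ι] [Fintype ι] {f g : (ι → Bool) → Bool} {Z W M : ι → Bool} {j : ι}

lemma mintermA (hR : Reach f g) (hg : Monotone g)
    (hZ : Minp f Z) (hg0 : g ⊥ = false) : ∀ x, x ≤ Z → g x = false := by
  have key : ∀ x, x ≤ Z → g x = g Z := by
    intro x hx
    obtain ⟨u, hu1, hu2, hfu, hgu⟩ := hR x Z hx true (g x) (Bool.le_true _)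
      (le_of_eq hZ.1.symm) le_rfl (hg hx)
    have := hZ.2 u hu2 hfu
    subst this; exact hgu.symm
  have h0 : g Z = false := by rw [← key ⊥ bot_le]; exact hg0
  intro x hx; rw [key x hx]; exact h0

lemma maxtermA (hR : Reach f g) (hg : Monotone g)
    (hM : Maxp f M) (hg1 : g ⊤ = true) : ∀ x, M ≤ x → g x = true := by
  have key : ∀ x, M ≤ x → g x = g M := by
    intro x hx
    obtain ⟨u, hu1, hu2, hfu, hgu⟩ := hR M x hx false (g x) (le_of_eq hM.1)
      (Bool.false_le _) (hg hx) le_rfl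
    have := hM.2 u hu1 hfu
    subst this; exact hgu.symm
  have h0 : g M = true := by rw [← key ⊤ le_top]; exact hg1
  intro x hx; rw [key x hx]; exact h0

lemma existsMinterm {x : ι → Bool} (hx : f x = true) :
    ∃ Z, Minp f Z ∧ Z ≤ x := by
  have hfin : ({y | y ≤ x ∧ f y = true} : Set (ι → Bool)).Finite := Set.toFinite _
  obtain ⟨Z, ⟨hZx, hZt⟩, hmin⟩ := hfin.exists_minimal ⟨x, le_rfl, hx⟩
  refine ⟨Z, ⟨hZt, ?_⟩, hZx⟩
  intro y hy hyt
  exact le_antisymm hy (hmin ⟨le_trans hy hZx, hyt⟩ hy)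

lemma existsMaxterm {x : ι → Bool} (hx : f x = false) :
    ∃ M, Maxp f M ∧ x ≤ M := by
  have hfin : ({y | x ≤ y ∧ f y = false} : Set (ι → Bool)).Finite := Set.toFinite _
  obtain ⟨M, ⟨hMx, hMt⟩, hmax⟩ := hfin.exists_maximal ⟨x, le_rfl, hx⟩
  refine ⟨M, ⟨hMt, ?_⟩, hMx⟩
  intro y hy hyt
  exact le_antisymm (hmax ⟨le_trans hMx hy, hyt⟩ hy) hy

theorem joinTop (hf : Monotone f) (hg : Monotone g) (hR : Reach f g)
    (hf0 : f ⊥ = false) (hg0 : g ⊥ = false)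
    (hZ : Minp f Z) (hW : Minp g W) (hZj : Z j = true) (hWj : W j = true)
    (ih : IH (Fintype.card ι)) :
    (∀ l, Z l = true ∨ W l = true) ∧
      f (fun l => !(decide (l = j))) = true ∧ g (fun l => !(decide (l = j))) = true := by
  classical
  set q : ι → Bool := fun l => Z l || W l with hq
  set v : ι → Bool := fun l => (Z l || W l) && !(decide (l = j)) with hv
  have hZq : Z ≤ q := fun l => ble.mpr (fun h => by rw [hq]; simp [h])
  have hWq : W ≤ q := fun l => ble.mpr (fun h => by rw [hq]; simp [h])
  have hvq : v ≤ q := fun l => ble.mpr (fun h => by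
    rw [hv] at h; rw [hq]; simp only [Bool.and_eq_true] at h; exact h.1)
  have hfq : f q = true := btrue hZ.1 (hf hZq)
  have hgq : g q = true := btrue hW.1 (hg hWq)
  have hsq : ∀ s : ι → Bool, v ≤ s → s ≤ q → s j = true → s = q := by
    intro s h1 h2 h3
    refine le_antisymm h2 (fun l => ble.mpr (fun hql => ?_))
    by_cases hl : l = j
    · subst hl; exact h3
    · refine btrue ?_ (h1 l)
      rw [hq] at hql; rw [hv]; simp only [Bool.and_eq_true]
      exact ⟨hql, by simp [hl]⟩
  have hsv : ∀ s : ι → Bool, s ≤ q → s j = false → s ≤ v := by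
    intro s h2 h3 l
    by_cases hl : l = j
    · subst hl; rw [h3]; exact Bool.false_le _
    · refine ble.mpr (fun hs => ?_)
      have hql := btrue hs (h2 l)
      rw [hq] at hql; rw [hv]; simp only [Bool.and_eq_true]
      exact ⟨hql, by simp [hl]⟩
  set Z' : ι → Bool := fun l => Z l && !(decide (l = j)) with hZ'
  set W' : ι → Bool := fun l => W l && !(decide (l = j)) with hW'
  have hZ'Z : Z' ≤ Z := fun l => ble.mpr (fun h => by
    rw [hZ'] at h; simp only [Bool.and_eq_true] at h; exact h.1)
  have hW'W : W' ≤ W := fun l => ble.mpr (fun h => by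
    rw [hW'] at h; simp only [Bool.and_eq_true] at h; exact h.1)
  have hZ'ne : Z' ≠ Z := by
    intro h
    have := congrFun h j
    rw [hZ'] at this; simp [hZj] at this
  have hW'ne : W' ≠ W := by
    intro h
    have := congrFun h j
    rw [hW'] at this; simp [hWj] at this
  have hfZ' : f Z' = false := by
    cases h : f Z' with
    | false => rfl
    | true => exact absurd (hZ.2 Z' hZ'Z h) hZ'ne
  have hgW' : g W' = false := by
    cases h : g W' with
    | false => rfl
    | true => exact absurd (hW.2 W' hW'W h) hW'ne
  have hgZle : ∀ x, x ≤ Z → g x = false := mintermA hR hg hZ hg0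
  have hZ's : ∀ s : ι → Bool, Z' ≤ s → s j = true → Z ≤ s := by
    intro s h1 h2 l
    by_cases hl : l = j
    · subst hl; rw [h2]; exact Bool.le_true _
    · refine ble.mpr (fun hZl => btrue ?_ (h1 l))
      rw [hZ']; simp only [Bool.and_eq_true]
      exact ⟨hZl, by simp [hl]⟩
  have hW's : ∀ s : ι → Bool, W' ≤ s → s j = true → W ≤ s := by
    intro s h1 h2 l
    by_cases hl : l = j
    · subst hl; rw [h2]; exact Bool.le_true _
    · refine ble.mpr (fun hWl => btrue ?_ (h1 l))
      rw [hW']; simp only [Bool.and_eq_true]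
      exact ⟨hWl, by simp [hl]⟩
  cases hfv : f v with
  | false =>
    exfalso
    cases hgv : g v with
    | false =>
      obtain ⟨s, hs1, hs2, hsf, hsg⟩ := hR v q hvq true false
        (Bool.le_true _) (le_of_eq hfq.symm) (le_of_eq hgv) (Bool.false_le _)
      cases hsj : s j with
      | true =>
        rw [hsq s hs1 hs2 hsj, hgq] at hsg; simp at hsg
      | false =>
        rw [bfalse hfv (hf (hsv s hs2 hsj))] at hsf; simp at hsf
    | true =>
      obtain ⟨s, hs1, hs2, hsf, hsg⟩ := hR W' q (le_trans hW'W hWq) true false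
        (Bool.le_true _) (le_of_eq hfq.symm) (le_of_eq hgW') (Bool.false_le _)
      cases hsj : s j with
      | true =>
        rw [btrue hW.1 (hg (hW's s hs1 hsj))] at hsg; simp at hsg
      | false =>
        rw [bfalse hfv (hf (hsv s hs2 hsj))] at hsf; simp at hsf
  | true =>
    cases hgv : g v with
    | false =>
      exfalso
      obtain ⟨s, hs1, hs2, hsf, hsg⟩ := hR Z' q (le_trans hZ'Z hZq) false true
        (le_of_eq hfZ') (Bool.false_le _) (Bool.le_true _) (le_of_eq hgq.symm)
      cases hsj : s j with
      | true =>
        rw [btrue hZ.1 (hf (hZ's s hs1 hsj))] at hsf; simp at hsf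
      | false =>
        rw [bfalse hgv (hg (hsv s hs2 hsj))] at hsg; simp at hsg
    | true =>
      have hT : ∀ l, Z l = true ∨ W l = true := by
        by_contra hc
        push_neg at hc
        obtain ⟨l₀, h1, h2⟩ := hc
        have hql₀ : ¬ (q l₀ = true) := by
          rw [hq]; simp only [Bool.or_eq_true]; rintro (h | h)
          exacts [h1 h, h2 h]
        have hcard : Fintype.card {l : ι // q l = true} < Fintype.card ι :=
          Fintype.card_subtype_lt hql₀
        set f' : ({l : ι // q l = true} → Bool) → Bool := fun y => f (ext q y) with hf'
        set g' : ({l : ι // q l = true} → Bool) → Bool := fun y => g (ext q y) with hg'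
        have hR' : Reach f' g' := by
          intro p' q' hpq c₁ c₂ a1 a2 a3 a4
          obtain ⟨u, hu1, hu2, huf, hug⟩ := hR (ext q p') (ext q q') (ext_mono hpq) c₁ c₂ a1 a2 a3 a4
          have huq : u ≤ q := le_trans hu2 (ext_le q')
          refine ⟨res q u, ?_, ?_, ?_, ?_⟩
          · intro i
            have h1 := hu1 i.1
            have he : ext q p' i.1 = p' i := by unfold ext; simp [i.2]
            rw [he] at h1; exact h1
          · intro i
            have h1 := hu2 i.1
            have he : ext q q' i.1 = q' i := by unfold ext; simp [i.2]
            rw [he] at h1; exact h1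
          · show f (ext q (res q u)) = c₁
            rw [ext_res huq]; exact huf
          · show g (ext q (res q u)) = c₂
            rw [ext_res huq]; exact hug
        have hminZ' : Minp f' (res q Z) := by
          constructor
          · show f (ext q (res q Z)) = true
            rw [ext_res hZq]; exact hZ.1
          · intro y hy hyt
            have h1 : ext q y ≤ Z := by
              have := ext_mono (Q := q) hy
              rwa [ext_res hZq] at this
            have h2 := hZ.2 (ext q y) h1 hyt
            rw [← res_ext y, h2]
        have hminW' : Minp g' (res q W) := by
          constructor
          · show g (ext q (res q W)) = true
            rw [ext_res hWq]; exact hW.1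
          · intro y hy hyt
            have h1 : ext q y ≤ W := by
              have := ext_mono (Q := q) hy
              rwa [ext_res hWq] at this
            have h2 := hW.2 (ext q y) h1 hyt
            rw [← res_ext y, h2]
        have hqj : q j = true := by rw [hq]; simp [hZj]
        exact ih {l : ι // q l = true} inferInstance inferInstance hcard f' g'
          (fun a b hab => hf (ext_mono hab)) (fun a b hab => hg (ext_mono hab)) hR'
          (by show f (ext q ⊥) = false; rw [ext_bot]; exact hf0)
          (by show g (ext q ⊥) = false; rw [ext_bot]; exact hg0)
          (res q Z) (res q W) ⟨j, hqj⟩ hminZ' hminW' hZj hWj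
      have hvtop : v = fun l => !(decide (l = j)) := by
        funext l
        rw [hv]
        rcases hT l with h | h <;> simp [h]
      rw [hvtop] at hfv hgv
      exact ⟨hT, hfv, hgv⟩

end

/-- pointwise complement -/
def cmpl (x : ι → Bool) : ι → Bool := fun l => !(x l)

lemma bnotle {a b : Bool} (h : a ≤ b) : (!b) ≤ (!a) := by revert h; revert a b; decide

lemma cmpl_cmpl (x : ι → Bool) : cmpl (cmpl x) = x := by
  funext l; unfold cmpl; simp

lemma cmpl_anti {x y : ι → Bool} (h : x ≤ y) : cmpl y ≤ cmpl x :=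
  fun l => bnotle (h l)

lemma cmpl_bot : cmpl (⊥ : ι → Bool) = ⊤ := by
  funext l; rfl

lemma cmpl_top : cmpl (⊤ : ι → Bool) = ⊥ := by
  funext l; rfl

section
variable [DecidableEq ι] [Fintype ι]

theorem coreAux : ∀ k : ℕ, IH k := by
  intro k
  induction k with
  | zero => intro κ _ _ h; omega
  | succ k ih =>
    intro κ _ _ hcard f g hf hg hR hf0 hg0 Z W j hZ hW hZj hWj
    have ihκ : IH (Fintype.card κ) := by
      intro κ' i1 i2 hc
      exact ih κ' i1 i2 (by omega)
    -- basic facts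
    have hftop : f ⊤ = true := btrue hZ.1 (hf le_top)
    have hgtop : g ⊤ = true := btrue hW.1 (hg le_top)
    obtain ⟨hT, hfv, hgv⟩ := joinTop hf hg hR hf0 hg0 hZ hW hZj hWj ihκ
    -- Z' = Z minus j, W' = W minus j
    set Z' : κ → Bool := fun l => Z l && !(decide (l = j)) with hZ'd
    set W' : κ → Bool := fun l => W l && !(decide (l = j)) with hW'd
    have hZ'Z : Z' ≤ Z := fun l => ble.mpr (fun h => by
      rw [hZ'd] at h; simp only [Bool.and_eq_true] at h; exact h.1)
    have hW'W : W' ≤ W := fun l => ble.mpr (fun h => by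
      rw [hW'd] at h; simp only [Bool.and_eq_true] at h; exact h.1)
    have hZ'ne : Z' ≠ Z := by
      intro h; have := congrFun h j; rw [hZ'd] at this; simp [hZj] at this
    have hW'ne : W' ≠ W := by
      intro h; have := congrFun h j; rw [hW'd] at this; simp [hWj] at this
    have hfZ' : f Z' = false := by
      cases h : f Z' with
      | false => rfl
      | true => exact absurd (hZ.2 Z' hZ'Z h) hZ'ne
    have hgW' : g W' = false := by
      cases h : g W' with
      | false => rfl
      | true => exact absurd (hW.2 W' hW'W h) hW'ne
    -- maxterms above Z', W'
    obtain ⟨Mx, hMx, hZ'M⟩ := existsMaxterm hfZ'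
    obtain ⟨Nx, hNx, hW'N⟩ := existsMaxterm hgW'
    have hMj : Mx j = false := by
      cases h : Mx j with
      | false => rfl
      | true =>
        exfalso
        have hZM : Z ≤ Mx := by
          intro l
          by_cases hl : l = j
          · subst hl; rw [h]; exact Bool.le_true _
          · refine ble.mpr (fun hZl => btrue ?_ (hZ'M l))
            rw [hZ'd]; simp only [Bool.and_eq_true]
            exact ⟨hZl, by simp [hl]⟩
        have h1 := hMx.1
        rw [btrue hZ.1 (hf hZM)] at h1
        exact Bool.noConfusion h1
    have hNj : Nx j = false := by
      cases h : Nx j with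
      | false => rfl
      | true =>
        exfalso
        have hWN : W ≤ Nx := by
          intro l
          by_cases hl : l = j
          · subst hl; rw [h]; exact Bool.le_true _
          · refine ble.mpr (fun hWl => btrue ?_ (hW'N l))
            rw [hW'd]; simp only [Bool.and_eq_true]
            exact ⟨hWl, by simp [hl]⟩
        have h1 := hNx.1
        rw [btrue hW.1 (hg hWN)] at h1
        exact Bool.noConfusion h1
    -- dual functions
    set F : (κ → Bool) → Bool := fun x => !(f (cmpl x)) with hF
    set G : (κ → Bool) → Bool := fun x => !(g (cmpl x)) with hG
    have hFm : Monotone F := by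
      intro x y hxy
      show (!(f (cmpl x))) ≤ (!(f (cmpl y)))
      exact bnotle (hf (cmpl_anti hxy))
    have hGm : Monotone G := by
      intro x y hxy
      show (!(g (cmpl x))) ≤ (!(g (cmpl y)))
      exact bnotle (hg (cmpl_anti hxy))
    have hRFG : Reach F G := by
      intro p q hpq c₁ c₂ a1 a2 a3 a4
      have b1 : f (cmpl q) ≤ (!c₁) := by
        have h : (!(!(f (cmpl q)))) ≤ (!c₁) := bnotle a2
        rwa [Bool.not_not] at h
      have b2 : (!c₁) ≤ f (cmpl p) := by
        have h : (!c₁) ≤ (!(!(f (cmpl p)))) := bnotle a1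
        rwa [Bool.not_not] at h
      have b3 : g (cmpl q) ≤ (!c₂) := by
        have h : (!(!(g (cmpl q)))) ≤ (!c₂) := bnotle a4
        rwa [Bool.not_not] at h
      have b4 : (!c₂) ≤ g (cmpl p) := by
        have h : (!c₂) ≤ (!(!(g (cmpl p)))) := bnotle a3
        rwa [Bool.not_not] at h
      obtain ⟨u, hu1, hu2, huf, hug⟩ := hR (cmpl q) (cmpl p) (cmpl_anti hpq) (!c₁) (!c₂) b1 b2 b3 b4
      refine ⟨cmpl u, ?_, ?_, ?_, ?_⟩
      · have := cmpl_anti hu2; rwa [cmpl_cmpl] at this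
      · have := cmpl_anti hu1; rwa [cmpl_cmpl] at this
      · show (!(f (cmpl (cmpl u)))) = c₁
        rw [cmpl_cmpl, huf, Bool.not_not]
      · show (!(g (cmpl (cmpl u)))) = c₂
        rw [cmpl_cmpl, hug, Bool.not_not]
    have hF0 : F ⊥ = false := by
      show (!(f (cmpl ⊥))) = false
      rw [cmpl_bot, hftop]; rfl
    have hG0 : G ⊥ = false := by
      show (!(g (cmpl ⊥))) = false
      rw [cmpl_bot, hgtop]; rfl
    have hMinF : Minp F (cmpl Mx) := by
      constructor
      · show (!(f (cmpl (cmpl Mx)))) = true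
        rw [cmpl_cmpl, hMx.1]; rfl
      · intro y hy hyt
        have h1 : Mx ≤ cmpl y := by
          have := cmpl_anti hy; rwa [cmpl_cmpl] at this
        have hyt' : (!(f (cmpl y))) = true := hyt
        have h2 : f (cmpl y) = false := by
          cases h : f (cmpl y) with
          | false => rfl
          | true => rw [h] at hyt'; exact Bool.noConfusion hyt'
        have h3 := hMx.2 (cmpl y) h1 h2
        rw [← h3, cmpl_cmpl]
    have hMinG : Minp G (cmpl Nx) := by
      constructor
      · show (!(g (cmpl (cmpl Nx)))) = true
        rw [cmpl_cmpl, hNx.1]; rfl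
      · intro y hy hyt
        have h1 : Nx ≤ cmpl y := by
          have := cmpl_anti hy; rwa [cmpl_cmpl] at this
        have hyt' : (!(g (cmpl y))) = true := hyt
        have h2 : g (cmpl y) = false := by
          cases h : g (cmpl y) with
          | false => rfl
          | true => rw [h] at hyt'; exact Bool.noConfusion hyt'
        have h3 := hNx.2 (cmpl y) h1 h2
        rw [← h3, cmpl_cmpl]
    have hMcj : cmpl Mx j = true := by unfold cmpl; rw [hMj]; rfl
    have hNcj : cmpl Nx j = true := by unfold cmpl; rw [hNj]; rfl
    obtain ⟨hT2, _, _⟩ := joinTop hFm hGm hRFG hF0 hG0 hMinF hMinG hMcj hNcj ihκ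
    -- M ≤ Z'
    have hMZ' : Mx = Z' := by
      refine le_antisymm ?_ hZ'M
      intro l
      refine ble.mpr (fun hMl => ?_)
      have hlj : l ≠ j := by
        intro h; rw [h, hMj] at hMl; exact Bool.noConfusion hMl
      have hNl : Nx l = false := by
        rcases hT2 l with h | h
        · exfalso; unfold cmpl at h; rw [hMl] at h; exact Bool.noConfusion h
        · unfold cmpl at h; revert h; cases Nx l <;> simp
      have hWl : W l = false := by
        have h1 := bfalse hNl (hW'N l)
        rw [hW'd] at h1
        simpa [hlj] using h1
      have hZl : Z l = true := by
        rcases hT l with h | h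
        · exact h
        · rw [hWl] at h; exact Bool.noConfusion h
      rw [hZ'd]; simp [hZl, hlj]
    -- g Mx = true, minterm below
    have hgMx : g Mx = true := maxtermA hR hg hMx hgtop Mx le_rfl
    obtain ⟨Ws, hWs, hWsM⟩ := existsMinterm hgMx
    have hWsne : ∃ l, Ws l = true := by
      by_contra hc
      push_neg at hc
      have : Ws = ⊥ := by
        funext l
        have := hc l
        revert this; cases Ws l <;> simp
      have h1 := hWs.1
      rw [this, hg0] at h1
      exact Bool.noConfusion h1
    obtain ⟨ls, hls⟩ := hWsne
    have hZ'ls : Z' ls = true := btrue hls (hMZ' ▸ hWsM ls)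
    have hZls : Z ls = true := by
      rw [hZ'd] at hZ'ls; simp only [Bool.and_eq_true] at hZ'ls; exact hZ'ls.1
    obtain ⟨hT3, _, _⟩ := joinTop hf hg hR hf0 hg0 hZ hWs hZls hls ihκ
    -- Z is everything
    have hZall : ∀ l, Z l = true := by
      intro l
      rcases hT3 l with h | h
      · exact h
      · have h2 := btrue h (hWsM l)
        rw [hMZ', hZ'd] at h2
        simp only [Bool.and_eq_true] at h2
        exact h2.1
    -- final contradiction with v
    have hvZ : (fun l => !(decide (l = j))) ≤ Z := by
      intro l; rw [hZall l]; exact Bool.le_true _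
    have := hZ.2 _ hvZ hfv
    have hj := congrFun this j
    simp [hZall j] at hj

end


end S8

/-- A function between preorders is interval-preserving if the image of every
(nonempty) interval is an interval. -/
def IsIntervalPreserving {α β : Type*} [Preorder α] [Preorder β] (f : α → β) : Prop :=
  ∀ p q : α, p ≤ q → ∃ a b : β, f '' Set.Icc p q = Set.Icc a b

namespace S8

section top
variable {m n : ℕ} (φ : (Fin m → Bool) → (Fin n → Bool))

lemma star2 (hm : Monotone φ) (hip : IsIntervalPreserving φ) :
    ∀ p q, p ≤ q → φ '' Set.Icc p q = Set.Icc (φ p) (φ q) := by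
  intro p q hpq
  obtain ⟨a, b, him⟩ := hip p q hpq
  have hp : φ p ∈ Set.Icc a b := by
    have h : φ p ∈ φ '' Set.Icc p q := ⟨p, ⟨le_rfl, hpq⟩, rfl⟩
    rwa [him] at h
  have hq : φ q ∈ Set.Icc a b := by
    have h : φ q ∈ φ '' Set.Icc p q := ⟨q, ⟨hpq, le_rfl⟩, rfl⟩
    rwa [him] at h
  have haleb : a ≤ b := le_trans hp.1 hp.2
  have ha : a = φ p := by
    have hmem : a ∈ φ '' Set.Icc p q := by rw [him]; exact ⟨le_rfl, haleb⟩
    obtain ⟨u, hu, hau⟩ := hmem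
    exact le_antisymm hp.1 (hau ▸ hm hu.1)
  have hb : b = φ q := by
    have hmem : b ∈ φ '' Set.Icc p q := by rw [him]; exact ⟨haleb, le_rfl⟩
    obtain ⟨u, hu, hbu⟩ := hmem
    exact le_antisymm (hbu ▸ hm hu.2) hq.2
  rw [him, ha, hb]

lemma reach_pair (hm : Monotone φ) (hip : IsIntervalPreserving φ)
    {i i' : Fin n} (hii : i ≠ i') :
    Reach (fun x => φ x i) (fun x => φ x i') := by
  intro p q hpq c₁ c₂ a1 a2 a3 a4
  set c : Fin n → Bool := fun k => if k = i then c₁ else if k = i' then c₂ else φ q k with hc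
  have hcmem : c ∈ Set.Icc (φ p) (φ q) := by
    constructor
    · intro k
      rw [hc]
      by_cases h1 : k = i
      · subst h1; simpa using a1
      · by_cases h2 : k = i'
        · subst h2; simpa [h1] using a3
        · simp only [h1, h2, if_false]; exact hm hpq k
    · intro k
      rw [hc]
      by_cases h1 : k = i
      · subst h1; simpa using a2
      · by_cases h2 : k = i'
        · subst h2; simpa [h1] using a4
        · simp only [h1, h2, if_false]; exact le_rfl
  rw [← star2 φ hm hip p q hpq] at hcmem
  obtain ⟨u, hu, huc⟩ := hcmem
  refine ⟨u, hu.1, hu.2, ?_, ?_⟩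
  · show φ u i = c₁
    rw [congrFun huc i]
    simp [hc]
  · show φ u i' = c₂
    rw [congrFun huc i']
    simp [hc, Ne.symm hii]

variable (hm : Monotone φ) (hs : Function.Surjective φ) (hip : IsIntervalPreserving φ)

include hm hs in
lemma phi_bot : φ ⊥ = ⊥ := by
  obtain ⟨x, hx⟩ := hs ⊥
  exact le_bot_iff.mp (hx ▸ hm (bot_le : (⊥ : Fin m → Bool) ≤ x))

include hm hs in
lemma phi_top : φ ⊤ = ⊤ := by
  obtain ⟨x, hx⟩ := hs ⊤
  exact top_le_iff.mp (hx ▸ hm (le_top : x ≤ (⊤ : Fin m → Bool)))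

/-- `j` is in the minterm-support of output `i` -/
def Tpred (i : Fin n) (j : Fin m) : Prop :=
  ∃ Z, Minp (fun x => φ x i) Z ∧ Z j = true

include hm hs hip in
lemma disj {i i' : Fin n} {j : Fin m} (h1 : Tpred φ i j) (h2 : Tpred φ i' j) : i = i' := by
  by_contra hii
  obtain ⟨Z, hZ, hZj⟩ := h1
  obtain ⟨W, hW, hWj⟩ := h2
  have hb := phi_bot φ hm hs
  exact coreAux (m + 1) (Fin m) inferInstance inferInstance
    (by rw [Fintype.card_fin]; omega)
    (fun x => φ x i) (fun x => φ x i')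
    (fun a b hab => hm hab i) (fun a b hab => hm hab i')
    (reach_pair φ hm hip hii)
    (by show φ ⊥ i = false; rw [hb]; rfl) (by show φ ⊥ i' = false; rw [hb]; rfl)
    Z W j hZ hW hZj hWj

end top

end S8

/-- A surjective interval-preserving monotone `φ : [1]^m → [1]^n` (with
`n ≥ 1`) decomposes, up to a coordinate permutation of the domain, as a product of
surjective monotone maps `φᵢ : [1]^{mᵢ} → [1]` with `m₁ + ⋯ + m_n = m`.  Here the
coordinate permutation and contiguous blocks are packaged as a bijection
`e : (Σ i, Fin (sz i)) ≃ Fin m` assigning the coordinates of each block. -/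
theorem stmt_8 {m n : ℕ} (hn : 1 ≤ n) (φ : (Fin m → Bool) → (Fin n → Bool))
    (hm : Monotone φ) (hs : Function.Surjective φ) (hip : IsIntervalPreserving φ) :
    ∃ (sz : Fin n → ℕ) (_ : ∑ i, sz i = m) (e : (Σ i : Fin n, Fin (sz i)) ≃ Fin m)
      (ψ : ∀ i : Fin n, (Fin (sz i) → Bool) → Bool),
      (∀ i, Monotone (ψ i) ∧ Function.Surjective (ψ i)) ∧
      ∀ (x : Fin m → Bool) (i : Fin n), φ x i = ψ i (fun j => x (e ⟨i, j⟩)) := by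
  classical
  set i₀ : Fin n := ⟨0, hn⟩ with hi₀
  -- the index assignment
  set idx : Fin m → Fin n := fun j => if h : ∃ i, S8.Tpred φ i j then h.choose else i₀ with hidxd
  have hidx : ∀ (i : Fin n) (j : Fin m), S8.Tpred φ i j → idx j = i := by
    intro i j hij
    have hex : ∃ i, S8.Tpred φ i j := ⟨i, hij⟩
    rw [hidxd]
    simp only [hex, dif_pos]
    exact S8.disj φ hm hs hip hex.choose_spec hij
  set B : Fin n → Finset (Fin m) := fun i => Finset.univ.filter (fun j => idx j = i) with hBd
  have hmemB : ∀ i j, S8.Tpred φ i j → j ∈ B i := by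
    intro i j hij
    rw [hBd]
    exact Finset.mem_filter.mpr ⟨Finset.mem_univ _, hidx i j hij⟩
  set sz : Fin n → ℕ := fun i => (B i).card with hszd
  have hsum : ∑ i, sz i = m := by
    rw [hszd]
    have := Finset.card_eq_sum_card_fiberwise
      (f := idx) (s := (Finset.univ : Finset (Fin m))) (t := (Finset.univ : Finset (Fin n)))
      (fun x _ => Finset.mem_univ _)
    rw [Finset.card_univ, Fintype.card_fin] at this
    rw [hBd]
    exact this.symm
  -- the equivalence
  set tf : (Σ i : Fin n, Fin (sz i)) → Fin m := fun p => ((B p.1).equivFin.symm p.2).1 with htfd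
  have hmemtf : ∀ (i : Fin n) (j : Fin (sz i)), tf ⟨i, j⟩ ∈ B i := by
    intro i j
    rw [htfd]
    exact ((B i).equivFin.symm j).2
  have hidxtf : ∀ (i : Fin n) (j : Fin (sz i)), idx (tf ⟨i, j⟩) = i := by
    intro i j
    have := hmemtf i j
    rw [hBd] at this
    exact (Finset.mem_filter.mp this).2
  have htfbij : Function.Bijective tf := by
    constructor
    · rintro ⟨i, j⟩ ⟨i', j'⟩ h
      have hii : i = i' := by
        rw [← hidxtf i j, ← hidxtf i' j', h]
      subst hii
      have hj : j = j' := by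
        have h2 : (B i).equivFin.symm j = (B i).equivFin.symm j' := Subtype.ext h
        exact (B i).equivFin.symm.injective h2
      rw [hj]
    · intro x
      have hx : x ∈ B (idx x) := by
        rw [hBd]
        exact Finset.mem_filter.mpr ⟨Finset.mem_univ _, rfl⟩
      refine ⟨⟨idx x, (B (idx x)).equivFin ⟨x, hx⟩⟩, ?_⟩
      rw [htfd]
      simp
  have htf_inv : ∀ (i : Fin n) (l : Fin m) (h : l ∈ B i), tf ⟨i, (B i).equivFin ⟨l, h⟩⟩ = l := by
    intro i l h
    rw [htfd]
    simp
  set e : (Σ i : Fin n, Fin (sz i)) ≃ Fin m := Equiv.ofBijective tf htfbij with hed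
  have happ : ∀ (i : Fin n) (j : Fin (sz i)), e ⟨i, j⟩ = tf ⟨i, j⟩ := fun _ _ => rfl
  -- the component maps
  set ex : ∀ i : Fin n, (Fin (sz i) → Bool) → (Fin m → Bool) :=
    fun i y l => if h : l ∈ B i then y ((B i).equivFin ⟨l, h⟩) else false with hexd
  set ψ : ∀ i : Fin n, (Fin (sz i) → Bool) → Bool := fun i y => φ (ex i y) i with hψd
  have hφbot := S8.phi_bot φ hm hs
  have hφtop := S8.phi_top φ hm hs
  -- dependence of output i only on Tpred-support
  have hdep : ∀ (i : Fin n) (x y : Fin m → Bool),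
      (∀ l, S8.Tpred φ i l → x l = y l) → φ x i = φ y i := by
    have haux : ∀ (i : Fin n) (x y : Fin m → Bool),
        (∀ l, S8.Tpred φ i l → x l = y l) → φ x i = true → φ y i = true := by
      intro i x y hxy hx
      obtain ⟨Z, hZ, hZx⟩ := S8.existsMinterm (f := fun x => φ x i) hx
      have hZy : Z ≤ y := by
        intro l
        refine S8.ble.mpr (fun hZl => ?_)
        rw [← hxy l ⟨Z, hZ, hZl⟩]
        exact S8.btrue hZl (hZx l)
      exact S8.btrue hZ.1 (hm hZy i)
    intro i x y hxy
    cases hy : φ y i with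
    | true => exact haux i y x (fun l hl => (hxy l hl).symm) hy
    | false =>
      cases hx : φ x i with
      | false => rfl
      | true => rw [← hy, haux i x y hxy hx]
  have hexmono : ∀ i, Monotone (ex i) := by
    intro i y y' h l
    rw [hexd]
    by_cases hl : l ∈ B i
    · simp only [hl, dif_pos]; exact h _
    · simp only [hl, dif_neg, not_false_iff]; exact le_rfl
  refine ⟨sz, hsum, e, ψ, fun i => ⟨?_, ?_⟩, ?_⟩
  · -- monotone
    intro y y' h
    show φ (ex i y) i ≤ φ (ex i y') i
    exact hm (hexmono i h) i
  · -- surjective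
    intro b
    cases b with
    | false =>
      refine ⟨⊥, ?_⟩
      show φ (ex i ⊥) i = false
      have : ex i ⊥ = ⊥ := by
        funext l
        rw [hexd]
        by_cases hl : l ∈ B i
        · simp only [hl, dif_pos]; rfl
        · simp only [hl, dif_neg, not_false_iff]; rfl
      rw [this, hφbot]; rfl
    | true =>
      refine ⟨⊤, ?_⟩
      show φ (ex i ⊤) i = true
      have hφti : φ ⊤ i = true := by rw [hφtop]; rfl
      obtain ⟨Z, hZ, _⟩ := S8.existsMinterm (f := fun x => φ x i) hφti
      have hZex : Z ≤ ex i ⊤ := by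
        intro l
        refine S8.ble.mpr (fun hZl => ?_)
        have hl : l ∈ B i := hmemB i l ⟨Z, hZ, hZl⟩
        rw [hexd]
        simp only [hl, dif_pos]
        rfl
      exact S8.btrue hZ.1 (hm hZex i)
  · -- the product identity
    intro x i
    show φ x i = φ (ex i (fun j => x (e ⟨i, j⟩))) i
    refine hdep i x (ex i (fun j => x (e ⟨i, j⟩))) ?_
    intro l hl
    have hlB : l ∈ B i := hmemB i l hl
    rw [hexd]
    simp only [hlB, dif_pos]
    rw [happ, htf_inv]
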